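/- Let (A, Con, ⊢, Δ) be an information system with witnesses. Then the domain of states |A| is algebraic if and only if A satisfies condition (ALG): for all (i,X) ∈ Con and finite F ⊆ A, if (i,X) ⊢ F then there exists a reflexive (j,V) ∈ Con (i.e. (j,V) ⊢ j and (j,V) ⊢ V) with (i,X) ⊢ (j,V) and (j,V) ⊢ F. -/
import Mathlib


/-- The way-below (approximation) relation in a preorder: `x` approximates `y` if
for every directed set `S` whose least upper bound exists, `y ≤ sup S` implies
`x ≤ u` for some `u ∈ S`. -/
def wayBelow {α : Type*} [Preorder α] (x y : α) : Prop :=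
  ∀ S : Set α, DirectedOn (· ≤ ·) S → S.Nonempty →
    ∀ l, IsLUB S l → y ≤ l → ∃ u ∈ S, x ≤ u

/-- Information system with witnesses (Definition 3.1). -/
structure IWS (A : Type*) where
  Δ : A
  Con : A → Finset A → Prop
  ent : A → Finset A → A → Prop
  entCon : ∀ i X a, ent i X a → Con i X
  ax1 : ∀ i, Con i {i}
  ax2 : ∀ i X Y, Y ⊆ X → Con i X → Con i Y
  ax3 : ∀ i, ent i ∅ Δ
  ax4 : ∀ i X Y, Con i X → (∀ a ∈ Y, ent i X a) → Con i Y
  ax5 : ∀ i X Y a, Con i X → Con i Y → X ⊆ Y → ent i X a → ent i Y a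
  ax6 : ∀ i X Y a, Con i X → (∀ b ∈ Y, ent i X b) → ent i Y a → ent i X a
  ax7 : ∀ i X a, ent i X a → ∃ Z, Con i Z ∧ (∀ z ∈ Z, ent i X z) ∧ ent i Z a
  ax8 : ∀ i X Y, Con i X → (∀ y ∈ Y, ent i X y) → ∃ e, ent i X e ∧ Con e Y
  ax9 : ∀ i j, Con j {i} → ∀ X, Con i X → Con j X
  ax10 : ∀ i j X a, Con j {i} → Con i X → ent i X a → ent j X a
  ax11 : ∀ i j X a, Con j {i} → Con i X → ent j X a → ent i X a

namespace IWS

variable {A : Type*}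

/-- A state of an information system with witnesses (Definition 3.5):
finitely consistent, entailment-closed and derivable. -/
def state (S : IWS A) (x : Set A) : Prop :=
  (∀ F : Finset A, ↑F ⊆ x → ∃ i ∈ x, S.Con i F) ∧
  (∀ i ∈ x, ∀ X : Finset A, ↑X ⊆ x → ∀ a, S.Con i X → S.ent i X a → a ∈ x) ∧
  (∀ a ∈ x, ∃ i ∈ x, ∃ X : Finset A, ↑X ⊆ x ∧ S.Con i X ∧ S.ent i X a)

/-- X-equivalence of witnesses (Definition 5.1). -/
def weq (S : IWS A) (X : Finset A) (i j : A) : Prop :=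
  ∃ (n : ℕ) (a k : ℕ → A), a 0 = i ∧ a n = j ∧
    ∀ ν, 1 ≤ ν → ν ≤ n →
      S.Con (a (ν - 1)) X ∧ S.Con (a ν) X ∧
      S.Con (k ν) {a (ν - 1)} ∧ S.Con (k ν) {a ν}

end IWS

/-- Approximable mappings between information systems with witnesses (Definition 4.1). -/
structure AppMap {A A' : Type*} (S : IWS A) (S' : IWS A') where
  rel : A → Finset A → A' → Prop
  relCon : ∀ i X b, rel i X b → S.Con i X
  am1 : rel S.Δ ∅ S'.Δ
  am2 : ∀ i X X' b, S.Con i X → S.Con i X' → X ⊆ X' → rel i X b → rel i X' b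
  am3 : ∀ i X X' b, S.Con i X → (∀ a ∈ X', S.ent i X a) → rel i X' b → rel i X b
  am4 : ∀ i X b, S.Con i X → rel i X b →
    ∃ U, S.Con i U ∧ (∀ u ∈ U, S.ent i X u) ∧ rel i U b
  am5 : ∀ i X k Y b, S.Con i X → S'.Con k Y → rel i X k → (∀ y ∈ Y, rel i X y) →
    S'.ent k Y b → rel i X b
  am6 : ∀ i X b, S.Con i X → rel i X b →
    ∃ d V, S'.Con d V ∧ rel i X d ∧ (∀ v ∈ V, rel i X v) ∧ S'.ent d V b
  am7 : ∀ i X F, S.Con i X → (∀ c ∈ F, rel i X c) → ∃ e, rel i X e ∧ S'.Con e F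
  am8 : ∀ i j X b, S.Con j {i} → S.Con i X → rel i X b → rel j X b
  am9 : ∀ i j X b, S.Con j {i} → S.Con i X → rel j X b → rel i X b


section Aux
set_option linter.unusedSectionVars false

namespace IWS

variable {A : Type*} [DecidableEq A] (S : IWS A)

/-- The set of tokens entailed by a consistent pair `(i, X)`. -/
def st (i : A) (X : Finset A) : Set A := {a | S.ent i X a}

lemma mem_st {i a : A} {X : Finset A} : a ∈ S.st i X ↔ S.ent i X a := Iff.rfl

lemma conSingleton {i a : A} {X : Finset A} (hc : S.Con i X) (h : S.ent i X a) :
    S.Con i {a} :=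
  S.ax4 i X {a} hc (by simpa using h)

/-- `st i X` is a state whenever `(i, X)` is consistent. -/
lemma st_state {i : A} {X : Finset A} (hc : S.Con i X) : S.state (S.st i X) := by
  refine ⟨?_, ?_, ?_⟩
  · intro F hF
    obtain ⟨e, he, hce⟩ := S.ax8 i X F hc (fun y hy => hF hy)
    exact ⟨e, he, hce⟩
  · intro k hk Y hY a hCk hE
    have hik : S.Con i {k} := S.conSingleton hc hk
    have hiYa : S.ent i Y a := S.ax10 k i Y a hik hCk hE
    exact S.ax6 i X Y a hc (fun b hb => hY hb) hiYa
  · intro a ha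
    obtain ⟨Z, hCZ, hZent, hZa⟩ := S.ax7 i X a ha
    obtain ⟨e, hee, hce⟩ := S.ax8 i X (insert a Z) hc (by
      intro y hy
      rcases Finset.mem_insert.1 hy with h | h
      · exact h ▸ ha
      · exact hZent y h)
    have hCeZ : S.Con e Z := S.ax2 e (insert a Z) Z (Finset.subset_insert _ _) hce
    have hie : S.Con i {e} := S.conSingleton hc hee
    have heZa : S.ent e Z a := S.ax11 e i Z a hie hCeZ hZa
    exact ⟨e, hee, Z, (fun z hz => hZent z hz), hCeZ, heZa⟩

/-- Everything entailed from inside a state belongs to the state. -/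
lemma st_subset {x : Set A} (hx : S.state x) {j : A} {V : Finset A}
    (hj : j ∈ x) (hV : ↑V ⊆ x) (hcv : S.Con j V) : S.st j V ⊆ x :=
  fun a ha => hx.2.1 j hj V hV a hcv ha

/-- Any finite subset of a state is jointly entailed from inside the state. -/
lemma exists_common {x : Set A} (hx : S.state x) (G : Finset A) (hG : ↑G ⊆ x) :
    ∃ m ∈ x, ∃ W : Finset A, ↑W ⊆ x ∧ S.Con m W ∧ ∀ g ∈ G, S.ent m W g := by
  classical
  have h : ∀ g ∈ G, ∃ i ∈ x, ∃ X : Finset A, ↑X ⊆ x ∧ S.Con i X ∧ S.ent i X g :=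
    fun g hg => hx.2.2 g (hG hg)
  choose! f hf1 Xf hXf hCf hEf using h
  set H : Finset A := G.image f ∪ G.biUnion Xf with hH
  have hHx : ↑H ⊆ x := by
    intro a ha
    rcases Finset.mem_union.1 ha with h' | h'
    · obtain ⟨g, hg, rfl⟩ := Finset.mem_image.1 h'
      exact hf1 g hg
    · obtain ⟨g, hg, hga⟩ := Finset.mem_biUnion.1 h'
      exact hXf g hg hga
  obtain ⟨m, hm, hmH⟩ := hx.1 H hHx
  refine ⟨m, hm, G.biUnion Xf, ?_, ?_, ?_⟩
  · intro a ha
    obtain ⟨g, hg, hga⟩ := Finset.mem_biUnion.1 ha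
    exact hXf g hg hga
  · exact S.ax2 m H _ Finset.subset_union_right hmH
  · intro g hg
    have hmf : S.Con m {f g} := by
      refine S.ax2 m H _ ?_ hmH
      simpa [hH] using Or.inl (Finset.mem_image_of_mem f hg)
    have hment : S.ent m (Xf g) g := S.ax10 (f g) m (Xf g) g hmf (hCf g hg) (hEf g hg)
    have hCmX : S.Con m (Xf g) := S.ax9 (f g) m hmf (Xf g) (hCf g hg)
    have hCmW : S.Con m (G.biUnion Xf) := S.ax2 m H _ Finset.subset_union_right hmH
    exact S.ax5 m (Xf g) (G.biUnion Xf) g hCmX hCmW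
      (fun a ha => Finset.mem_biUnion.2 ⟨g, hg, ha⟩) hment

end IWS

variable {A : Type*} [DecidableEq A] {S : IWS A}

/-- In a directed nonempty family of states, every finset of the union lies in one member. -/
lemma finset_subset_directed {D : Set {x : Set A // S.state x}}
    (hdir : DirectedOn (· ≤ ·) D) (hne : D.Nonempty) (F : Finset A)
    (hF : ∀ a ∈ F, ∃ u ∈ D, a ∈ u.val) : ∃ u ∈ D, ↑F ⊆ u.val := by
  classical
  induction F using Finset.induction_on with
  | empty => obtain ⟨u, hu⟩ := hne; exact ⟨u, hu, by simp⟩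
  | @insert a F ha ih =>
    obtain ⟨u, hu, hFu⟩ := ih (fun b hb => hF b (Finset.mem_insert_of_mem hb))
    obtain ⟨v, hv, hav⟩ := hF a (Finset.mem_insert_self a F)
    obtain ⟨w, hw, huw, hvw⟩ := hdir u hu v hv
    refine ⟨w, hw, ?_⟩
    intro b hb
    rcases Finset.mem_insert.1 hb with rfl | hb
    · exact hvw hav
    · exact huw (hFu hb)

/-- The union of a nonempty directed family of states is a state. -/
lemma union_state {D : Set {x : Set A // S.state x}}
    (hdir : DirectedOn (· ≤ ·) D) (hne : D.Nonempty) :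
    S.state (⋃ u ∈ D, u.val) := by
  have hmem : ∀ a, a ∈ (⋃ u ∈ D, u.val) ↔ ∃ u ∈ D, a ∈ u.val := by
    intro a; simp
  refine ⟨?_, ?_, ?_⟩
  · intro F hF
    obtain ⟨u, hu, hFu⟩ := finset_subset_directed hdir hne F
      (fun a ha => (hmem a).1 (hF ha))
    obtain ⟨i, hi, hci⟩ := u.2.1 F hFu
    exact ⟨i, (hmem i).2 ⟨u, hu, hi⟩, hci⟩
  · intro i hi X hX a hci he
    obtain ⟨u, hu, hu'⟩ := finset_subset_directed hdir hne (insert i X) (by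
      intro b hb
      rcases Finset.mem_insert.1 hb with rfl | hb
      · exact (hmem b).1 hi
      · exact (hmem b).1 (hX hb))
    have hiu : i ∈ u.val := hu' (Finset.mem_insert_self i X)
    have hXu : ↑X ⊆ u.val := fun b hb => hu' (Finset.mem_insert_of_mem hb)
    exact (hmem a).2 ⟨u, hu, u.2.2.1 i hiu X hXu a hci he⟩
  · intro a ha
    obtain ⟨u, hu, hau⟩ := (hmem a).1 ha
    obtain ⟨i, hi, X, hX, hci, he⟩ := u.2.2.2 a hau
    exact ⟨i, (hmem i).2 ⟨u, hu, hi⟩, X,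
      fun b hb => (hmem b).2 ⟨u, hu, hX hb⟩, hci, he⟩

/-- A least upper bound of a nonempty directed family of states is contained in the union. -/
lemma lub_subset_union {D : Set {x : Set A // S.state x}}
    (hdir : DirectedOn (· ≤ ·) D) (hne : D.Nonempty)
    {l : {x : Set A // S.state x}} (hl : IsLUB D l) :
    l.val ⊆ ⋃ u ∈ D, u.val := by
  have : l ≤ ⟨⋃ u ∈ D, u.val, union_state hdir hne⟩ := by
    apply hl.2
    intro u hu
    exact Set.subset_biUnion_of_mem (u := fun u : {x : Set A // S.state x} => u.val) hu
  exact this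

/-- A state of the form `st j V` with `(j,V)` reflexive is way below any larger state. -/
lemma st_wayBelow {j : A} {V : Finset A} (hcv : S.Con j V)
    (hjj : S.ent j V j) (hVV : ∀ v ∈ V, S.ent j V v)
    {y z : {x : Set A // S.state x}} (hy : y.val = S.st j V) (hyz : y ≤ z) :
    wayBelow y z := by
  intro D hdir hne l hl hzl
  have hsub : y.val ⊆ ⋃ u ∈ D, u.val :=
    fun a ha => lub_subset_union hdir hne hl (hzl (hyz ha))
  obtain ⟨u, hu, hu'⟩ := finset_subset_directed hdir hne (insert j V) (by
    intro b hb
    have hb' : b ∈ y.val := by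
      rw [hy]
      rcases Finset.mem_insert.1 hb with rfl | hb
      · exact hjj
      · exact hVV b hb
    simpa using hsub hb')
  refine ⟨u, hu, ?_⟩
  show y.val ⊆ u.val
  rw [hy]
  exact S.st_subset u.2 (hu' (Finset.mem_insert_self j V))
    (fun b hb => hu' (Finset.mem_insert_of_mem hb)) hcv

/-- Every compact state has the form `st m W` with `m ∈ u`, `W ⊆ u`. -/
lemma compact_repr {u : {x : Set A // S.state x}} (hc : wayBelow u u) :
    ∃ m ∈ u.val, ∃ W : Finset A, ↑W ⊆ u.val ∧ S.Con m W ∧ u.val = S.st m W := by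
  classical
  set D : Set {x : Set A // S.state x} :=
    {y | ∃ m ∈ u.val, ∃ W : Finset A, ↑W ⊆ u.val ∧ S.Con m W ∧ y.val = S.st m W} with hD
  have hub : ∀ y ∈ D, y ≤ u := by
    rintro y ⟨m, hm, W, hW, hCW, hy⟩
    show y.val ⊆ u.val
    rw [hy]
    exact S.st_subset u.2 hm hW hCW
  have hne : D.Nonempty := by
    obtain ⟨i, hi, _⟩ := u.2.1 ∅ (by simp)
    obtain ⟨i0, hi0, X0, hX0, hC0, hE0⟩ := u.2.2.2 i hi
    exact ⟨⟨S.st i0 X0, S.st_state hC0⟩, i0, hi0, X0, hX0, hC0, rfl⟩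
  have hdir : DirectedOn (· ≤ ·) D := by
    rintro y ⟨m, hm, W, hW, hCW, hy⟩ y' ⟨m', hm', W', hW', hCW', hy'⟩
    obtain ⟨m'', hm'', W'', hW'', hCW'', hE''⟩ := S.exists_common u.2
      (insert m W ∪ insert m' W') (by
        intro b hb
        rcases Finset.mem_union.1 hb with h | h
        · rcases Finset.mem_insert.1 h with rfl | h
          · exact hm
          · exact hW h
        · rcases Finset.mem_insert.1 h with rfl | h
          · exact hm'
          · exact hW' h)
    set y'' : {x : Set A // S.state x} := ⟨S.st m'' W'', S.st_state hCW''⟩ with hy''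
    have hsub : ∀ (k : A) (Z : Finset A), S.Con k Z → k ∈ insert m W ∪ insert m' W' →
        (↑Z : Set A) ⊆ ↑(insert m W ∪ insert m' W') → S.st k Z ⊆ y''.val := by
      intro k Z hkZ hk hZ
      exact S.st_subset y''.2 (hE'' k hk) (fun b hb => hE'' b (hZ hb)) hkZ
    refine ⟨y'', ⟨m'', hm'', W'', hW'', hCW'', rfl⟩, ?_, ?_⟩
    · show y.val ⊆ y''.val
      rw [hy]
      exact hsub m W hCW (by simp) (by intro b hb; simp_all)
    · show y'.val ⊆ y''.val
      rw [hy']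
      exact hsub m' W' hCW' (by simp) (by intro b hb; simp_all)
  have hlub : IsLUB D u := by
    constructor
    · exact hub
    · intro w hw
      show u.val ⊆ w.val
      intro a ha
      obtain ⟨i0, hi0, X0, hX0, hC0, hE0⟩ := u.2.2.2 a ha
      have : (⟨S.st i0 X0, S.st_state hC0⟩ : {x : Set A // S.state x}) ∈ D :=
        ⟨i0, hi0, X0, hX0, hC0, rfl⟩
      exact hw this hE0
  obtain ⟨y, hyD, huy⟩ := hc D hdir hne u hlub le_rfl
  obtain ⟨m, hm, W, hW, hCW, hy⟩ := hyD
  refine ⟨m, hm, W, hW, hCW, ?_⟩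
  apply Set.Subset.antisymm
  · exact hy ▸ huy
  · exact hy ▸ hub y ⟨m, hm, W, hW, hCW, hy⟩

end Aux

/-- Theorem 3.10: the domain of states is algebraic iff condition (ALG) holds. -/
theorem algebraic_iff_ALG {A : Type*} (S : IWS A) :
    (∀ x : {x : Set A // S.state x},
      ∃ D ⊆ {u : {x : Set A // S.state x} | wayBelow u u ∧ wayBelow u x},
        D.Nonempty ∧ DirectedOn (· ≤ ·) D ∧ IsLUB D x) ↔
    (∀ i (X F : Finset A), S.Con i X → (∀ a ∈ F, S.ent i X a) →
      ∃ j V, S.Con j V ∧ S.ent j V j ∧ (∀ v ∈ V, S.ent j V v) ∧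
        S.ent i X j ∧ (∀ v ∈ V, S.ent i X v) ∧ ∀ a ∈ F, S.ent j V a) := by
  classical
  constructor
  · -- algebraic ⟹ (ALG)
    intro halg i X F hC hF
    set x : {x : Set A // S.state x} := ⟨S.st i X, S.st_state hC⟩ with hx
    obtain ⟨D, hDsub, hDne, hDdir, hlub⟩ := halg x
    have hxu : x.val ⊆ ⋃ u ∈ D, u.val := lub_subset_union hDdir hDne hlub
    obtain ⟨u, hu, hFu⟩ := finset_subset_directed hDdir hDne F (by
      intro a ha
      have hax : a ∈ x.val := hF a ha
      simpa using hxu hax)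
    have hcu : wayBelow u u := (hDsub hu).1
    obtain ⟨m, hm, W, hW, hCW, hEq⟩ := compact_repr hcu
    have hux : u.val ⊆ x.val := hlub.1 hu
    have hmemst : ∀ a ∈ u.val, S.ent m W a := by
      intro a ha
      have : a ∈ S.st m W := hEq ▸ ha
      exact this
    refine ⟨m, W, hCW, hmemst m hm, fun v hv => hmemst v (hW hv), hux hm,
      fun v hv => hux (hW hv), fun a ha => hmemst a (hFu ha)⟩
  · -- (ALG) ⟹ algebraic
    intro halg x
    set D : Set {x' : Set A // S.state x'} :=
      {y | ∃ j V, S.Con j V ∧ S.ent j V j ∧ (∀ v ∈ V, S.ent j V v) ∧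
        j ∈ x.val ∧ ↑V ⊆ x.val ∧ y.val = S.st j V} with hD
    have hmemx : ∀ {j : A} {V : Finset A}, S.Con j V → j ∈ x.val → ↑V ⊆ x.val →
        S.st j V ⊆ x.val := fun h hj hV => S.st_subset x.2 hj hV h
    have hmk : ∀ (i0 : A) (X0 G : Finset A), i0 ∈ x.val → ↑X0 ⊆ x.val → S.Con i0 X0 →
        (∀ a ∈ G, S.ent i0 X0 a) →
        ∃ j V, S.Con j V ∧ S.ent j V j ∧ (∀ v ∈ V, S.ent j V v) ∧ j ∈ x.val ∧
          ↑V ⊆ x.val ∧ ∀ a ∈ G, S.ent j V a := by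
      intro i0 X0 G hi0 hX0 hC0 hG
      obtain ⟨j, V, hCV, hjj, hVV, hj, hV, hGF⟩ := halg i0 X0 G hC0 hG
      exact ⟨j, V, hCV, hjj, hVV, x.2.2.1 i0 hi0 X0 hX0 j hC0 hj,
        fun v hv => x.2.2.1 i0 hi0 X0 hX0 v hC0 (hV v hv), hGF⟩
    have hDsub : D ⊆ {u : {x' : Set A // S.state x'} | wayBelow u u ∧ wayBelow u x} := by
      rintro y ⟨j, V, hCV, hjj, hVV, hj, hV, hy⟩
      have hyx : y ≤ x := by
        show y.val ⊆ x.val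
        rw [hy]
        exact hmemx hCV hj hV
      exact ⟨st_wayBelow hCV hjj hVV hy le_rfl, st_wayBelow hCV hjj hVV hy hyx⟩
    have hDne : D.Nonempty := by
      obtain ⟨i, hi, hci⟩ := x.2.1 ∅ (by simp)
      obtain ⟨j, V, hCV, hjj, hVV, hjx, hVx, -⟩ :=
        hmk i ∅ ∅ hi (by simp) hci (by simp)
      exact ⟨⟨S.st j V, S.st_state hCV⟩, j, V, hCV, hjj, hVV, hjx, hVx, rfl⟩
    have hDdir : DirectedOn (· ≤ ·) D := by
      rintro y ⟨j, V, hCV, hjj, hVV, hj, hV, hy⟩ y' ⟨j', V', hCV', hjj', hVV', hj', hV', hy'⟩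
      obtain ⟨m, hm, W, hW, hCmW, hEnt⟩ := S.exists_common x.2
        (insert j V ∪ insert j' V') (by
          intro b hb
          rcases Finset.mem_union.1 hb with h | h
          · rcases Finset.mem_insert.1 h with rfl | h
            · exact hj
            · exact hV h
          · rcases Finset.mem_insert.1 h with rfl | h
            · exact hj'
            · exact hV' h)
      obtain ⟨k, U, hCU, hkk, hUU, hkx, hUx, hGk⟩ :=
        hmk m W (insert j V ∪ insert j' V') hm hW hCmW hEnt
      set y'' : {x' : Set A // S.state x'} := ⟨S.st k U, S.st_state hCU⟩ with hy''
      have hsub : ∀ (p : A) (Z : Finset A), S.Con p Z →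
          p ∈ insert j V ∪ insert j' V' →
          (↑Z : Set A) ⊆ ↑(insert j V ∪ insert j' V') → S.st p Z ⊆ y''.val := by
        intro p Z hpZ hp hZ
        exact S.st_subset y''.2 (hGk p hp) (fun b hb => hGk b (hZ hb)) hpZ
      refine ⟨y'', ⟨k, U, hCU, hkk, hUU, hkx, hUx, rfl⟩, ?_, ?_⟩
      · show y.val ⊆ y''.val
        rw [hy]
        exact hsub j V hCV (by simp) (by intro b hb; simp_all)
      · show y'.val ⊆ y''.val
        rw [hy']
        exact hsub j' V' hCV' (by simp) (by intro b hb; simp_all)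
    refine ⟨D, hDsub, hDne, hDdir, ?_, ?_⟩
    · rintro y ⟨j, V, hCV, hjj, hVV, hj, hV, hy⟩
      show y.val ⊆ x.val
      rw [hy]
      exact hmemx hCV hj hV
    · intro w hw
      show x.val ⊆ w.val
      intro a ha
      obtain ⟨i0, hi0, X0, hX0, hC0, hE0⟩ := x.2.2.2 a ha
      obtain ⟨j, V, hCV, hjj, hVV, hjx, hVx, hVa⟩ :=
        hmk i0 X0 {a} hi0 hX0 hC0 (by simpa using hE0)
      have hyD : (⟨S.st j V, S.st_state hCV⟩ : {x' : Set A // S.state x'}) ∈ D :=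
        ⟨j, V, hCV, hjj, hVV, hjx, hVx, rfl⟩
      exact hw hyD (hVa a (Finset.mem_singleton_self a))
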